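/- Let R > 0 and let Ψ : ℂ → ℂ be holomorphic on {z ∈ ℂ : |z| > R} with Ψ(z)/z → 1 as |z| → ∞. Let ρ > R and let w ∈ ℂ be such that Ψ(z) ≠ w for every z with |z| ≥ ρ. Then for every integer n ≥ 1, the circle integral ∮_{|z|=ρ} z^{−n} · Ψ′(z)/(Ψ(z) − w) dz equals 0. -/

import Mathlib

open Filter Metric Set

/-- From `Ψ z / z → 1` we extract a bound `‖Ψ z - z‖ ≤ ‖z‖ / 4` for large `‖z‖`. -/
lemma aux_growth (Ψ : ℂ → ℂ)
    (hlim : Tendsto (fun z : ℂ => Ψ z / z) (comap norm atTop) (nhds 1)) :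
    ∃ M : ℝ, 1 ≤ M ∧ ∀ z : ℂ, M ≤ ‖z‖ → ‖Ψ z - z‖ ≤ ‖z‖ / 4 := by
  have h : ∀ᶠ z : ℂ in comap norm atTop, ‖Ψ z / z - 1‖ ≤ 1/4 := by
    have := hlim (Metric.closedBall_mem_nhds (1 : ℂ) (by norm_num : (0:ℝ) < 1/4))
    filter_upwards [this] with z hz
    simpa [Metric.mem_closedBall, dist_eq_norm] using hz
  rw [eventually_comap, eventually_atTop] at h
  obtain ⟨a, ha⟩ := h
  refine ⟨max a 1, le_max_right _ _, fun z hz => ?_⟩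
  have hz1 : (1:ℝ) ≤ ‖z‖ := le_trans (le_max_right a 1) hz
  have hz0 : z ≠ 0 := by
    intro h0; rw [h0] at hz1; simp at hz1; linarith
  have hb := ha ‖z‖ (le_trans (le_max_left a 1) hz) z rfl
  have : Ψ z - z = z * (Ψ z / z - 1) := by
    field_simp
  rw [this, norm_mul]
  calc ‖z‖ * ‖Ψ z / z - 1‖ ≤ ‖z‖ * (1/4) := by
        exact mul_le_mul_of_nonneg_left hb (norm_nonneg _)
    _ = ‖z‖ / 4 := by ring

/-- The Cauchy-type circle integral of `z^{-n} Ψ'(z)/(Ψ(z) - w)` over `|z| = ρ`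
vanishes for every `n ≥ 1`. -/
theorem circleIntegral_negative_power_eq_zero
    (R : ℝ) (hR : 0 < R) (Ψ : ℂ → ℂ)
    (hΨ : DifferentiableOn ℂ Ψ {z : ℂ | R < ‖z‖})
    (hlim : Tendsto (fun z : ℂ => Ψ z / z) (comap norm atTop) (nhds 1))
    (ρ : ℝ) (hρ : R < ρ) (w : ℂ)
    (hw : ∀ z : ℂ, ρ ≤ ‖z‖ → Ψ z ≠ w) :
    ∀ n : ℕ, 1 ≤ n →
      (∮ z in C(0, ρ), z ^ (-(n : ℤ)) * deriv Ψ z / (Ψ z - w)) = 0 := by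
  intro n hn
  obtain ⟨M, hM1, hM⟩ := aux_growth Ψ hlim
  set U : Set ℂ := {z : ℂ | R < ‖z‖} with hU
  have hUopen : IsOpen U := isOpen_lt continuous_const continuous_norm
  set f : ℂ → ℂ := fun z => z ^ (-(n : ℤ)) * deriv Ψ z / (Ψ z - w) with hf
  have hρ0 : 0 < ρ := lt_trans hR hρ
  -- differentiability of f at every point of norm ≥ ρ
  have hderivΨ : DifferentiableOn ℂ (deriv Ψ) U :=
    ((hΨ.analyticOnNhd hUopen).deriv).differentiableOn
  have hfdiff : ∀ z : ℂ, ρ ≤ ‖z‖ → DifferentiableAt ℂ f z := by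
    intro z hz
    have hzU : z ∈ U := by simp only [hU, mem_setOf_eq]; linarith
    have hz0 : z ≠ 0 := by
      intro h0; rw [h0] at hz; simp at hz; linarith
    have h1 : DifferentiableAt ℂ (fun z : ℂ => z ^ (-(n : ℤ))) z :=
      differentiableAt_zpow.2 (Or.inl hz0)
    have h2 : DifferentiableAt ℂ (deriv Ψ) z :=
      (((hΨ.analyticOnNhd hUopen).deriv) z hzU).differentiableAt
    have h3 : DifferentiableAt ℂ Ψ z :=
      ((hΨ.analyticOnNhd hUopen) z hzU).differentiableAt
    exact (h1.mul h2).div (h3.sub_const w) (sub_ne_zero.2 (hw z hz))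
  -- the deriv bound for large z
  set M₂ : ℝ := max (2 * M) (2 * (R + 1)) with hM₂
  have hΨbound : ∀ z : ℂ, M ≤ ‖z‖ → ‖Ψ z‖ ≤ 2 * ‖z‖ := by
    intro z hz
    have := hM z hz
    calc ‖Ψ z‖ = ‖(Ψ z - z) + z‖ := by ring_nf
      _ ≤ ‖Ψ z - z‖ + ‖z‖ := norm_add_le _ _
      _ ≤ ‖z‖ / 4 + ‖z‖ := by linarith
      _ ≤ 2 * ‖z‖ := by
          have : (0:ℝ) ≤ ‖z‖ := norm_nonneg _
          linarith
  have hderiv_bound : ∀ z : ℂ, M₂ ≤ ‖z‖ → ‖deriv Ψ z‖ ≤ 6 := by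
    intro z hz
    have hz0 : 0 < ‖z‖ := lt_of_lt_of_le (by positivity) (le_trans (le_max_right _ _) hz)
    have hrpos : 0 < ‖z‖ / 2 := by positivity
    have hsub : closedBall z (‖z‖ / 2) ⊆ U := by
      intro ζ hζ
      simp only [hU, mem_setOf_eq]
      have : ‖z - ζ‖ ≤ ‖z‖ / 2 := by
        rw [← dist_eq_norm, dist_comm]; exact mem_closedBall.1 hζ
      have h4 : ‖z‖ - ‖ζ‖ ≤ ‖z‖ / 2 := le_trans (norm_sub_norm_le _ _) this
      have h5 : 2 * (R + 1) ≤ ‖z‖ := le_trans (le_max_right _ _) hz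
      linarith
    have hdc : DiffContOnCl ℂ Ψ (ball z (‖z‖ / 2)) := hΨ.diffContOnCl_ball hsub
    have hC : ∀ ζ ∈ sphere z (‖z‖ / 2), ‖Ψ ζ‖ ≤ 3 * ‖z‖ := by
      intro ζ hζ
      have hdist : ‖ζ - z‖ = ‖z‖ / 2 := mem_sphere_iff_norm.1 hζ
      have hζub : ‖ζ‖ ≤ 3 / 2 * ‖z‖ := by
        calc ‖ζ‖ = ‖(ζ - z) + z‖ := by ring_nf
          _ ≤ ‖ζ - z‖ + ‖z‖ := norm_add_le _ _
          _ = ‖z‖ / 2 + ‖z‖ := by rw [hdist]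
          _ = 3 / 2 * ‖z‖ := by ring
      have hζlb : M ≤ ‖ζ‖ := by
        have : ‖z‖ - ‖ζ‖ ≤ ‖z‖ / 2 := by
          have := norm_sub_norm_le z ζ
          rw [show z - ζ = -(ζ - z) by ring, norm_neg, hdist] at this
          linarith
        have h6 : 2 * M ≤ ‖z‖ := le_trans (le_max_left _ _) hz
        linarith
      calc ‖Ψ ζ‖ ≤ 2 * ‖ζ‖ := hΨbound ζ hζlb
        _ ≤ 2 * (3 / 2 * ‖z‖) := by linarith
        _ = 3 * ‖z‖ := by ring
    have := Complex.norm_deriv_le_of_forall_mem_sphere_norm_le hrpos hdc hC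
    calc ‖deriv Ψ z‖ ≤ 3 * ‖z‖ / (‖z‖ / 2) := this
      _ = 6 := by rw [div_eq_iff hrpos.ne']; ring
  -- lower bound on |Ψ z - w| for large z
  set M₃ : ℝ := max M (4 * ‖w‖ + 1) with hM₃
  have hΨw : ∀ z : ℂ, M₃ ≤ ‖z‖ → ‖z‖ / 2 ≤ ‖Ψ z - w‖ := by
    intro z hz
    have h1 := hM z (le_trans (le_max_left _ _) hz)
    have h2 : 4 * ‖w‖ + 1 ≤ ‖z‖ := le_trans (le_max_right _ _) hz
    have : ‖z‖ - ‖Ψ z - w - z‖ ≤ ‖Ψ z - w‖ := by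
      have := norm_sub_norm_le z (z - (Ψ z - w))
      have h7 : z - (z - (Ψ z - w)) = Ψ z - w := by ring
      rw [h7] at this
      have h8 : ‖z - (Ψ z - w)‖ = ‖Ψ z - w - z‖ := by
        rw [show z - (Ψ z - w) = -(Ψ z - w - z) by ring, norm_neg]
      linarith [this, h8.le, h8.ge]
    have h9 : ‖Ψ z - w - z‖ ≤ ‖z‖ / 4 + ‖w‖ := by
      calc ‖Ψ z - w - z‖ = ‖(Ψ z - z) + (-w)‖ := by ring_nf
        _ ≤ ‖Ψ z - z‖ + ‖(-w)‖ := norm_add_le _ _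
        _ ≤ ‖z‖ / 4 + ‖w‖ := by rw [norm_neg]; linarith
    linarith
  -- the integral at radius ρ equals that at any larger radius r
  have hconst : ∀ r : ℝ, ρ ≤ r →
      (∮ z in C(0, ρ), f z) = ∮ z in C(0, r), f z := by
    intro r hr
    refine (Complex.circleIntegral_eq_of_differentiable_on_annulus_off_countable hρ0 hr
      Set.countable_empty ?_ ?_).symm
    · intro z hz
      obtain ⟨hz1, hz2⟩ := hz
      have : ρ ≤ ‖z‖ := by
        simp only [mem_ball, Complex.dist_eq, not_lt] at hz2
        simpa using hz2
      exact (hfdiff z this).continuousAt.continuousWithinAt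
    · intro z hz
      obtain ⟨⟨hz1, hz2⟩, _⟩ := hz
      apply hfdiff
      simp only [mem_closedBall, Complex.dist_eq, not_le] at hz2
      simpa using hz2.le
  -- the bound at radius r
  set r₀ : ℝ := max (max M₂ M₃) (max ρ 1) with hr₀
  have hbound : ∀ r : ℝ, r₀ ≤ r → ‖∮ z in C(0, ρ), f z‖ ≤ 2 * Real.pi * (12 / r) := by
    intro r hr
    have hrρ : ρ ≤ r := le_trans (le_trans (le_max_left _ _) (le_max_right _ _)) hr
    have hr1 : (1:ℝ) ≤ r := le_trans (le_trans (le_max_right _ _) (le_max_right _ _)) hr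
    have hrM₂ : M₂ ≤ r := le_trans (le_trans (le_max_left _ _) (le_max_left _ _)) hr
    have hrM₃ : M₃ ≤ r := le_trans (le_trans (le_max_right _ _) (le_max_left _ _)) hr
    have hrpos : 0 < r := lt_of_lt_of_le one_pos hr1
    rw [hconst r hrρ]
    have key : ∀ z ∈ sphere (0:ℂ) r, ‖f z‖ ≤ 12 / r ^ 2 := by
      intro z hz
      have hznorm : ‖z‖ = r := by
        have := mem_sphere_iff_norm.1 hz
        simpa using this
      have hz0 : z ≠ 0 := by
        intro h; rw [h] at hznorm; simp at hznorm; linarith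
      have h1 : ‖z ^ (-(n : ℤ))‖ = r ^ (-(n : ℤ)) := by
        rw [norm_zpow, hznorm]
      have h2 : ‖deriv Ψ z‖ ≤ 6 := hderiv_bound z (hznorm ▸ hrM₂)
      have h3 : r / 2 ≤ ‖Ψ z - w‖ := hznorm ▸ hΨw z (hznorm ▸ hrM₃)
      have h4 : (0:ℝ) < ‖Ψ z - w‖ := lt_of_lt_of_le (by positivity) h3
      rw [hf]
      simp only [norm_div, norm_mul, h1]
      have h5 : r ^ (-(n : ℤ)) ≤ r⁻¹ := by
        rw [zpow_neg]
        have : r ^ (1:ℤ) ≤ r ^ (n:ℤ) := by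
          apply zpow_le_zpow_right₀ hr1
          exact_mod_cast hn
        have hpos : (0:ℝ) < r ^ (n:ℤ) := zpow_pos hrpos _
        calc (r ^ (n:ℤ))⁻¹ ≤ (r ^ (1:ℤ))⁻¹ := by
              apply inv_anti₀ _ this
              simpa using hrpos
          _ = r⁻¹ := by simp
        -- inv_le_inv_of_le : 0 < a → a ≤ b → b⁻¹ ≤ a⁻¹
      calc r ^ (-(n:ℤ)) * ‖deriv Ψ z‖ / ‖Ψ z - w‖
          ≤ r⁻¹ * 6 / (r / 2) := by
            apply div_le_div₀ (by positivity) _ (by positivity) h3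
            apply mul_le_mul h5 h2 (norm_nonneg _) (by positivity)
        _ = 12 / r ^ 2 := by field_simp; ring
    have := circleIntegral.norm_integral_le_of_norm_le_const (le_of_lt hrpos) key
    calc ‖∮ z in C(0, r), f z‖ ≤ 2 * Real.pi * r * (12 / r ^ 2) := this
      _ = 2 * Real.pi * (12 / r) := by field_simp
  -- conclusion: the norm is ≤ every term of a sequence tending to 0
  have htend : Tendsto (fun r : ℝ => 2 * Real.pi * (12 / r)) atTop (nhds 0) := by
    have h1 : Tendsto (fun r : ℝ => 12 / r) atTop (nhds 0) :=
      tendsto_const_nhds.div_atTop tendsto_id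
    have := h1.const_mul (2 * Real.pi)
    simpa using this
  have hle : ‖∮ z in C(0, ρ), f z‖ ≤ 0 := by
    refine ge_of_tendsto htend ?_
    filter_upwards [eventually_ge_atTop r₀] with r hr using hbound r hr
  have := le_antisymm hle (norm_nonneg _)
  exact norm_eq_zero.1 this
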